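/- The 5 × 5 rational matrix M = [[1, 0, 0, 0, 0], [1, 3/10, 9/200, 0, 9/2000], [1, 3/5, 9/50, 27/500, 9/250], [1, 1, 1/2, 7/60, 1/6], [1, 7/8, 49/128, 161/1536, 343/3072]] has determinant zero. Consequently the linear system expressing the elementary differentials f, f'f, (f f'² + f² f''), f f'³, (4 f² f' f'' + f³ f''') in terms of the Cash–Karp stages k₁, k₃, k₄, k₅, k₆ does not have a unique solution, so a quartic run-time interpolant cannot be constructed this way from the Cash–Karp 4-5 stages. -/

import Mathlib

theorem stmt_13 (M : Matrix (Fin 5) (Fin 5) ℚ)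
    (hM : M = !![1, 0, 0, 0, 0;
                 1, 3/10, 9/200, 0, 9/2000;
                 1, 3/5, 9/50, 27/500, 9/250;
                 1, 1, 1/2, 7/60, 1/6;
                 1, 7/8, 49/128, 161/1536, 343/3072]) :
    M.det = 0 ∧ ¬ Function.Injective M.mulVec := by
  have hdet : M.det = 0 := by
    subst hM
    simp [Matrix.det_succ_row_zero, Fin.sum_univ_succ, Fin.succAbove, show (Fin.castSucc 2 : Fin 4) = 2 from rfl]
    norm_num
  refine ⟨hdet, ?_⟩
  intro hinj
  obtain ⟨v, hv, hv0⟩ := (Matrix.exists_mulVec_eq_zero_iff).mpr hdet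
  apply hv
  have : M.mulVec v = M.mulVec 0 := by simp [hv0]
  exact hinj this
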